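/- Let R > 0, v₀ ∈ ℝ and k ≥ 0 with (k > 0 or v₀ ≥ 0). Set C = v₀² + k/R². Then R² + 2 v₀ R t + C t² > 0 for all t ≥ 0, and the function X(t) = √(R² + 2 v₀ R t + C t²) is twice continuously differentiable on [0,∞) and satisfies X″(t) = k / X(t)³ for all t ≥ 0, with X(0) = R and X′(0) = v₀. -/

import Mathlib

theorem fourD_characteristic_explicit (R v₀ k : ℝ) (hR : 0 < R) (hk : 0 ≤ k)
    (h : 0 < k ∨ 0 ≤ v₀) :
    let C : ℝ := v₀ ^ 2 + k / R ^ 2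
    let X : ℝ → ℝ := fun t => Real.sqrt (R ^ 2 + 2 * v₀ * R * t + C * t ^ 2)
    (∀ t : ℝ, 0 ≤ t → 0 < R ^ 2 + 2 * v₀ * R * t + C * t ^ 2) ∧
    ContDiffOn ℝ 2 X (Set.Ici 0) ∧
    (∀ t : ℝ, 0 ≤ t →
      derivWithin (derivWithin X (Set.Ici 0)) (Set.Ici 0) t = k / X t ^ 3) ∧
    X 0 = R ∧ derivWithin X (Set.Ici 0) 0 = v₀ := by
  intro C X
  set P : ℝ → ℝ := fun t => R ^ 2 + 2 * v₀ * R * t + C * t ^ 2 with hPdef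
  have hCnn : 0 ≤ C := by have : 0 ≤ k / R ^ 2 := by positivity
                          simp only [C]; positivity
  have hpos : ∀ t : ℝ, 0 ≤ t → 0 < P t := by
    intro t ht
    rcases h with hk' | hv
    · have hid : P t = (R + v₀ * t) ^ 2 + (k / R ^ 2) * t ^ 2 := by
        simp only [hPdef, C]; ring
      rcases eq_or_lt_of_le ht with h0 | h0
      · simp only [hPdef, ← h0]; norm_num; positivity
      · rw [hid]
        have : 0 < (k / R ^ 2) * t ^ 2 := by positivity
        nlinarith [sq_nonneg (R + v₀ * t)]
    · have h1 : 0 ≤ 2 * v₀ * R * t := by positivity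
      have h2 : 0 ≤ C * t ^ 2 := by positivity
      have h3 : 0 < R ^ 2 := by positivity
      simp only [hPdef]; linarith
  have hP' : ∀ t : ℝ, HasDerivAt P (2 * v₀ * R + 2 * C * t) t := by
    intro t
    have h1 : HasDerivAt (fun x : ℝ => R ^ 2 + 2 * v₀ * R * x + C * x ^ 2)
        (0 + 2 * v₀ * R * 1 + C * (↑2 * t ^ (2 - 1))) t :=
      ((hasDerivAt_const t (R ^ 2)).add ((hasDerivAt_id t).const_mul (2 * v₀ * R))).add
        ((hasDerivAt_pow 2 t).const_mul C)
    convert h1 using 1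
    push_cast; ring
  set g : ℝ → ℝ := fun t => (v₀ * R + C * t) / Real.sqrt (P t) with hgdef
  have hX' : ∀ t : ℝ, 0 ≤ t → HasDerivAt X (g t) t := by
    intro t ht
    have hs : 0 < Real.sqrt (P t) := Real.sqrt_pos.mpr (hpos t ht)
    have := (Real.hasDerivAt_sqrt (hpos t ht).ne').comp t (hP' t)
    convert this using 1 <;> try rfl
    try simp only [hgdef]
    field_simp
    try ring
  have hg' : ∀ t : ℝ, 0 ≤ t → HasDerivAt g (k / X t ^ 3) t := by
    intro t ht
    have hs : 0 < Real.sqrt (P t) := Real.sqrt_pos.mpr (hpos t ht)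
    have hu : HasDerivAt (fun x : ℝ => v₀ * R + C * x) C t := by
      have := (hasDerivAt_const t (v₀ * R)).add ((hasDerivAt_id t).const_mul C)
      simp only [zero_add, mul_one] at this
      exact this
    have hv : HasDerivAt (fun x : ℝ => Real.sqrt (P x)) (g t) t := hX' t ht
    have hdiv := hu.div hv hs.ne'
    convert hdiv using 1 <;> try rfl
    have hsq : Real.sqrt (P t) * Real.sqrt (P t) = P t := Real.mul_self_sqrt (hpos t ht).le
    have key : C * P t - (v₀ * R + C * t) ^ 2 = k := by
      simp only [hPdef, C]
      field_simp
      ring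
    show k / X t ^ 3 = (C * Real.sqrt (P t) - (v₀ * R + C * t) * g t) / Real.sqrt (P t) ^ 2
    simp only [hgdef]
    have hX3 : X t ^ 3 = Real.sqrt (P t) ^ 3 := rfl
    rw [hX3]
    set s := Real.sqrt (P t) with hsdef
    have h2 : C * s * s - (v₀ * R + C * t) * (v₀ * R + C * t) = k := by
      linear_combination key + C * hsq
    have hs' : s ≠ 0 := hs.ne'
    clear_value s
    clear hsq key hdiv hv hu hX' hpos hX3 hsdef hgdef hPdef hP'
    clear g X P
    clear_value C
    field_simp
    linear_combination (-1 : ℝ) * h2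
  have hEq : Set.EqOn (derivWithin X (Set.Ici 0)) g (Set.Ici 0) := by
    intro s hs
    exact ((hX' s hs).hasDerivWithinAt).derivWithin (uniqueDiffOn_Ici 0 s hs)
  refine ⟨hpos, ?_, ?_, ?_, ?_⟩
  · intro t ht
    have hPc : ContDiff ℝ 2 P := by
      simp only [hPdef]
      exact (contDiff_const.add (contDiff_const.mul contDiff_id)).add
        (contDiff_const.mul (contDiff_id.pow 2))
    exact ((Real.contDiffAt_sqrt (hpos t ht).ne').comp t hPc.contDiffAt).contDiffWithinAt
  · intro t ht
    rw [derivWithin_congr hEq (hEq ht)]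
    exact ((hg' t ht).hasDerivWithinAt).derivWithin (uniqueDiffOn_Ici 0 t ht)
  · show Real.sqrt (R ^ 2 + 2 * v₀ * R * 0 + C * 0 ^ 2) = R
    rw [show R ^ 2 + 2 * v₀ * R * 0 + C * 0 ^ 2 = R ^ 2 by ring]
    exact Real.sqrt_sq hR.le
  · rw [hEq (Set.self_mem_Ici)]
    simp only [hgdef, hPdef]
    rw [show R ^ 2 + 2 * v₀ * R * 0 + C * 0 ^ 2 = R ^ 2 by ring, Real.sqrt_sq hR.le]
    field_simp
    simp
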